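/- (Theorem 1: optimality of a threshold policy) Let V : [0,1] → ℝ be bounded and convex, with x ↦ V(Γ_x(b)) W_b(x) μ-integrable for every b, and suppose V satisfies the Bellman equation V(b) = max{ λ b + β ∫_X V(Γ_x(b)) W_b(x) dμ(x), λ − c + β V(1−p) } for all b ∈ [0,1]. Then there exists b* ∈ ℝ such that the set I = { b ∈ [0,1] : λ − c + β V(1−p) ≥ λ b + β ∫_X V(Γ_x(b)) W_b(x) dμ(x) } of belief states at which the repair action is optimal satisfies I = [0, b*] ∩ [0,1] (in particular I is empty when b* < 0, and 0 ∈ I whenever I is nonempty). -/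

import Mathlib

open MeasureTheory

/-- Unnormalized observation probability `W_b(x) = Q1(x) b + Q0(x)(1-b)`. -/
noncomputable def Wf {X : Type*} (Q0 Q1 : X → ℝ) (b : ℝ) (x : X) : ℝ :=
  Q1 x * b + Q0 x * (1 - b)

/-- Do-nothing belief update `Γ_x(b) = (1-p) Q1(x) b / W_b(x)`; since in `ℝ`
division by zero yields `0`, this automatically satisfies the convention
`Γ_x(b) = 0` when `W_b(x) = 0`. -/
noncomputable def Gf {X : Type*} (p : ℝ) (Q0 Q1 : X → ℝ) (x : X) (b : ℝ) : ℝ :=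
  (1 - p) * Q1 x * b / Wf Q0 Q1 b x

lemma adr_aux_mem (p q0 q1 b : ℝ) (hp0 : 0 ≤ p) (hp1 : p ≤ 1)
    (hq0 : 0 ≤ q0) (hq1 : 0 ≤ q1) (hb0 : 0 ≤ b) (hb1 : b ≤ 1) :
    (1 - p) * q1 * b / (q1 * b + q0 * (1 - b)) ∈ Set.Icc (0:ℝ) 1 := by
  have hwnn : 0 ≤ q1 * b + q0 * (1 - b) :=
    add_nonneg (mul_nonneg hq1 hb0) (mul_nonneg hq0 (by linarith))
  rcases eq_or_lt_of_le hwnn with h | h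
  · rw [← h, div_zero]; exact ⟨le_rfl, zero_le_one⟩
  · constructor
    · exact div_nonneg (mul_nonneg (mul_nonneg (by linarith) hq1) hb0) h.le
    · rw [div_le_one h]
      nlinarith [mul_nonneg (mul_nonneg hq1 hb0) hp0]

lemma adr_aux_numer (p q0 q1 b : ℝ)
    (hq0 : 0 ≤ q0) (hq1 : 0 ≤ q1) (hb0 : 0 ≤ b) (hb1 : b ≤ 1) :
    ((1 - p) * q1 * b / (q1 * b + q0 * (1 - b))) * (q1 * b + q0 * (1 - b))
      = (1 - p) * q1 * b := by
  have hwnn : 0 ≤ q1 * b + q0 * (1 - b) :=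
    add_nonneg (mul_nonneg hq1 hb0) (mul_nonneg hq0 (by linarith))
  rcases eq_or_lt_of_le hwnn with h | h
  · have h1 : q1 * b = 0 := by
      nlinarith [mul_nonneg hq1 hb0, mul_nonneg hq0 (show (0:ℝ) ≤ 1 - b by linarith)]
    rw [← h, mul_zero]
    rw [mul_assoc, h1, mul_zero]
  · exact div_mul_cancel₀ _ (ne_of_gt h)

lemma adr_aux_ptconv (V : ℝ → ℝ) (hV : ConvexOn ℝ (Set.Icc (0:ℝ) 1) V)
    (p q0 q1 a b ta tb : ℝ) (hp0 : 0 ≤ p) (hp1 : p ≤ 1)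
    (hq0 : 0 ≤ q0) (hq1 : 0 ≤ q1)
    (ha0 : 0 ≤ a) (ha1 : a ≤ 1) (hb0 : 0 ≤ b) (hb1 : b ≤ 1)
    (hta : 0 ≤ ta) (htb : 0 ≤ tb) (hsum : ta + tb = 1) :
    V ((1 - p) * q1 * (ta*a + tb*b) / (q1 * (ta*a + tb*b) + q0 * (1 - (ta*a + tb*b)))) *
        (q1 * (ta*a + tb*b) + q0 * (1 - (ta*a + tb*b)))
      ≤ ta * (V ((1 - p) * q1 * a / (q1 * a + q0 * (1 - a))) * (q1 * a + q0 * (1 - a)))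
        + tb * (V ((1 - p) * q1 * b / (q1 * b + q0 * (1 - b))) * (q1 * b + q0 * (1 - b))) := by
  have hc0 : 0 ≤ ta*a + tb*b := add_nonneg (mul_nonneg hta ha0) (mul_nonneg htb hb0)
  have hc1 : ta*a + tb*b ≤ 1 := by
    nlinarith [mul_le_mul_of_nonneg_left ha1 hta, mul_le_mul_of_nonneg_left hb1 htb]
  set c := ta*a + tb*b with hc
  set w1 := q1 * a + q0 * (1 - a) with hw1
  set w2 := q1 * b + q0 * (1 - b) with hw2
  set w := q1 * c + q0 * (1 - c) with hw
  have hw1n : 0 ≤ w1 := add_nonneg (mul_nonneg hq1 ha0) (mul_nonneg hq0 (by linarith))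
  have hw2n : 0 ≤ w2 := add_nonneg (mul_nonneg hq1 hb0) (mul_nonneg hq0 (by linarith))
  have hwn : 0 ≤ w := add_nonneg (mul_nonneg hq1 hc0) (mul_nonneg hq0 (by linarith))
  have hwsum : w = ta*w1 + tb*w2 := by
    simp only [hw, hw1, hw2, hc]; linear_combination (-q0) * hsum
  rcases eq_or_lt_of_le hwn with hw0 | hwpos
  · have h1 : ta*w1 = 0 := by
      nlinarith [mul_nonneg hta hw1n, mul_nonneg htb hw2n]
    have h2 : tb*w2 = 0 := by
      nlinarith [mul_nonneg hta hw1n, mul_nonneg htb hw2n]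
    have hL : V ((1-p)*q1*c/w) * w = 0 := by rw [← hw0, mul_zero]
    rw [hL]
    have e2 : ta * (V ((1-p)*q1*a/w1) * w1) = 0 := by
      have : ta * (V ((1-p)*q1*a/w1) * w1) = V ((1-p)*q1*a/w1) * (ta*w1) := by ring
      rw [this, h1, mul_zero]
    have e3 : tb * (V ((1-p)*q1*b/w2) * w2) = 0 := by
      have : tb * (V ((1-p)*q1*b/w2) * w2) = V ((1-p)*q1*b/w2) * (tb*w2) := by ring
      rw [this, h2, mul_zero]
    rw [e2, e3]; norm_num
  · have hg1 : (1-p)*q1*a/w1 ∈ Set.Icc (0:ℝ) 1 := by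
      rw [hw1]; exact adr_aux_mem p q0 q1 a hp0 hp1 hq0 hq1 ha0 ha1
    have hg2 : (1-p)*q1*b/w2 ∈ Set.Icc (0:ℝ) 1 := by
      rw [hw2]; exact adr_aux_mem p q0 q1 b hp0 hp1 hq0 hq1 hb0 hb1
    have hn1 : ((1-p)*q1*a/w1) * w1 = (1-p)*q1*a := by
      rw [hw1]; exact adr_aux_numer p q0 q1 a hq0 hq1 ha0 ha1
    have hn2 : ((1-p)*q1*b/w2) * w2 = (1-p)*q1*b := by
      rw [hw2]; exact adr_aux_numer p q0 q1 b hq0 hq1 hb0 hb1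
    set m1 := ta*w1/w with hm1
    set m2 := tb*w2/w with hm2
    have hm1n : 0 ≤ m1 := div_nonneg (mul_nonneg hta hw1n) hwpos.le
    have hm2n : 0 ≤ m2 := div_nonneg (mul_nonneg htb hw2n) hwpos.le
    have hmsum : m1 + m2 = 1 := by
      rw [hm1, hm2]
      field_simp
      linarith [hwsum]
    have e1 : m1 * ((1-p)*q1*a/w1) = ta*((1-p)*q1*a)/w := by
      calc m1 * ((1-p)*q1*a/w1) = ta * (((1-p)*q1*a/w1) * w1) / w := by rw [hm1]; ring
        _ = ta*((1-p)*q1*a)/w := by rw [hn1]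
    have e2 : m2 * ((1-p)*q1*b/w2) = tb*((1-p)*q1*b)/w := by
      calc m2 * ((1-p)*q1*b/w2) = tb * (((1-p)*q1*b/w2) * w2) / w := by rw [hm2]; ring
        _ = tb*((1-p)*q1*b)/w := by rw [hn2]
    have harg : m1 * ((1-p)*q1*a/w1) + m2 * ((1-p)*q1*b/w2) = (1-p)*q1*c/w := by
      rw [e1, e2, ← add_div]
      congr 1
      rw [hc]; ring
    have hVle := hV.2 hg1 hg2 hm1n hm2n hmsum
    simp only [smul_eq_mul] at hVle
    rw [harg] at hVle
    have hexp : (m1 * V ((1-p)*q1*a/w1) + m2 * V ((1-p)*q1*b/w2)) * w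
        = ta * (V ((1-p)*q1*a/w1) * w1) + tb * (V ((1-p)*q1*b/w2) * w2) := by
      rw [hm1, hm2]; field_simp
    exact (mul_le_mul_of_nonneg_right hVle hwpos.le).trans (le_of_eq hexp)

/-- **Theorem 1: optimality of a threshold policy.**  Let
`V : [0,1] → ℝ` be bounded and convex, with `x ↦ V(Γ_x(b)) W_b(x)`
μ-integrable for every `b`, satisfying the Bellman equation
`V(b) = max{ λ b + β ∫ V(Γ_x(b)) W_b(x) dμ(x), λ − c + β V(1−p) }` on `[0,1]`.
Then there exists `b* ∈ ℝ` such that the set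
`I = { b ∈ [0,1] : λ − c + β V(1−p) ≥ λ b + β ∫ V(Γ_x(b)) W_b(x) dμ(x) }`
of belief states at which the repair action is optimal equals
`[0, b*] ∩ [0,1]` (in particular `I = ∅` when `b* < 0`, and `0 ∈ I` whenever
`I` is nonempty). -/
theorem adr_threshold_policy_optimal
    {X : Type*} [MeasurableSpace X] (μ : Measure X) [SigmaFinite μ]
    (p lam c β : ℝ)
    (hp : p ∈ Set.Icc (0 : ℝ) 1) (hlam : 0 < lam) (hc : 0 < c)
    (hβ : β ∈ Set.Ioo (0 : ℝ) 1)
    (Q0 Q1 : X → ℝ)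
    (hQ0meas : Measurable Q0) (hQ1meas : Measurable Q1)
    (hQ0nn : ∀ x, 0 ≤ Q0 x) (hQ1nn : ∀ x, 0 ≤ Q1 x)
    (hQ0int : ∫ x, Q0 x ∂μ = 1) (hQ1int : ∫ x, Q1 x ∂μ = 1)
    (V : ℝ → ℝ)
    (hVbdd : ∃ C, ∀ b ∈ Set.Icc (0 : ℝ) 1, |V b| ≤ C)
    (hVconv : ConvexOn ℝ (Set.Icc (0 : ℝ) 1) V)
    (hVint : ∀ b ∈ Set.Icc (0 : ℝ) 1,
      Integrable (fun x => V (Gf p Q0 Q1 x b) * Wf Q0 Q1 b x) μ)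
    (hBellman : ∀ b ∈ Set.Icc (0 : ℝ) 1,
      V b = max (lam * b + β * ∫ x, V (Gf p Q0 Q1 x b) * Wf Q0 Q1 b x ∂μ)
                (lam - c + β * V (1 - p))) :
    ∃ bstar : ℝ,
      {b ∈ Set.Icc (0 : ℝ) 1 |
          lam - c + β * V (1 - p) ≥
            lam * b + β * ∫ x, V (Gf p Q0 Q1 x b) * Wf Q0 Q1 b x ∂μ} =
        Set.Icc 0 bstar ∩ Set.Icc (0 : ℝ) 1 := by
  obtain ⟨hp0, hp1⟩ := hp
  obtain ⟨hβ0, hβ1⟩ := hβ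
  -- integrability of the densities
  have hQ0i : Integrable Q0 μ := by
    by_contra h
    rw [integral_undef h] at hQ0int
    exact one_ne_zero hQ0int.symm
  have hQ1i : Integrable Q1 μ := by
    by_contra h
    rw [integral_undef h] at hQ1int
    exact one_ne_zero hQ1int.symm
  set K := lam - c + β * V (1 - p) with hKdef
  set F : ℝ → ℝ := fun b => ∫ x, V (Gf p Q0 Q1 x b) * Wf Q0 Q1 b x ∂μ with hFdef
  have hFapp : ∀ b, (∫ x, V (Gf p Q0 Q1 x b) * Wf Q0 Q1 b x ∂μ) = F b := by
    intro b; rw [hFdef]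
  simp only [hFapp] at hBellman ⊢
  -- basic facts
  have Wnn : ∀ b ∈ Set.Icc (0:ℝ) 1, ∀ x, 0 ≤ Wf Q0 Q1 b x := by
    intro b hb x
    simp only [Wf]
    exact add_nonneg (mul_nonneg (hQ1nn x) hb.1) (mul_nonneg (hQ0nn x) (by linarith [hb.2]))
  have Gmem : ∀ b ∈ Set.Icc (0:ℝ) 1, ∀ x, Gf p Q0 Q1 x b ∈ Set.Icc (0:ℝ) 1 := by
    intro b hb x
    simp only [Gf, Wf]
    exact adr_aux_mem p (Q0 x) (Q1 x) b hp0 hp1 (hQ0nn x) (hQ1nn x) hb.1 hb.2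
  have hWint : ∀ b : ℝ, Integrable (fun x => Wf Q0 Q1 b x) μ := by
    intro b
    simp only [Wf]
    exact (hQ1i.mul_const b).add (hQ0i.mul_const (1-b))
  have hWone : ∀ b : ℝ, (∫ x, Wf Q0 Q1 b x ∂μ) = 1 := by
    intro b
    simp only [Wf]
    rw [integral_add (hQ1i.mul_const b) (hQ0i.mul_const (1-b)),
      integral_mul_const, integral_mul_const, hQ0int, hQ1int]
    ring
  have hVgeK : ∀ t ∈ Set.Icc (0:ℝ) 1, K ≤ V t := by
    intro t ht
    rw [hBellman t ht]
    exact le_max_right _ _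
  have hFlb : ∀ b ∈ Set.Icc (0:ℝ) 1, K ≤ F b := by
    intro b hb
    have hint1 : Integrable (fun x => K * Wf Q0 Q1 b x) μ := (hWint b).const_mul K
    have hmono : (∫ x, K * Wf Q0 Q1 b x ∂μ) ≤ ∫ x, V (Gf p Q0 Q1 x b) * Wf Q0 Q1 b x ∂μ :=
      integral_mono hint1 (hVint b hb)
        (fun x => mul_le_mul_of_nonneg_right (hVgeK _ (Gmem b hb x)) (Wnn b hb x))
    have hval : (∫ x, K * Wf Q0 Q1 b x ∂μ) = K := by
      rw [integral_const_mul, hWone b, mul_one]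
    rw [hval, hFapp b] at hmono
    exact hmono
  have hF1 : F 1 = V (1 - p) := by
    have heq : ∀ x, V (Gf p Q0 Q1 x 1) * Wf Q0 Q1 1 x = V (1-p) * Q1 x := by
      intro x
      simp only [Gf, Wf]
      rcases eq_or_lt_of_le (hQ1nn x) with h | h
      · rw [← h]; norm_num
      · have h1 : Q1 x * 1 + Q0 x * (1 - 1) = Q1 x := by ring
        rw [h1]
        have h2 : (1 - p) * Q1 x * 1 / Q1 x = 1 - p := by
          field_simp
        rw [h2]
    rw [← hFapp 1]
    calc (∫ x, V (Gf p Q0 Q1 x 1) * Wf Q0 Q1 1 x ∂μ) = ∫ x, V (1-p) * Q1 x ∂μ := by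
          simp only [heq]
      _ = V (1-p) * ∫ x, Q1 x ∂μ := integral_const_mul _ _
      _ = V (1-p) := by rw [hQ1int, mul_one]
  have hF0 : F 0 = V 0 := by
    have heq : ∀ x, V (Gf p Q0 Q1 x 0) * Wf Q0 Q1 0 x = V 0 * Q0 x := by
      intro x
      simp only [Gf, Wf]
      norm_num
    rw [← hFapp 0]
    calc (∫ x, V (Gf p Q0 Q1 x 0) * Wf Q0 Q1 0 x ∂μ) = ∫ x, V 0 * Q0 x ∂μ := by
          simp only [heq]
      _ = V 0 * ∫ x, Q0 x ∂μ := integral_const_mul _ _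
      _ = V 0 := by rw [hQ0int, mul_one]
  -- chord inequality (convexity of b ↦ lam*b + β*F b)
  have hchord : ∀ a ∈ Set.Icc (0:ℝ) 1, ∀ b ∈ Set.Icc (0:ℝ) 1, ∀ ta tb : ℝ,
      0 ≤ ta → 0 ≤ tb → ta + tb = 1 →
      lam*(ta*a+tb*b) + β*F (ta*a+tb*b) ≤ ta*(lam*a+β*F a) + tb*(lam*b+β*F b) := by
    intro a ha b hb ta tb hta htb hsum
    have hmem : ta*a+tb*b ∈ Set.Icc (0:ℝ) 1 := by
      constructor
      · exact add_nonneg (mul_nonneg hta ha.1) (mul_nonneg htb hb.1)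
      · nlinarith [mul_le_mul_of_nonneg_left ha.2 hta, mul_le_mul_of_nonneg_left hb.2 htb]
    have hpt : ∀ x, V (Gf p Q0 Q1 x (ta*a+tb*b)) * Wf Q0 Q1 (ta*a+tb*b) x
        ≤ ta*(V (Gf p Q0 Q1 x a) * Wf Q0 Q1 a x) + tb*(V (Gf p Q0 Q1 x b) * Wf Q0 Q1 b x) := by
      intro x
      simp only [Gf, Wf]
      exact adr_aux_ptconv V hVconv p (Q0 x) (Q1 x) a b ta tb hp0 hp1 (hQ0nn x) (hQ1nn x)
        ha.1 ha.2 hb.1 hb.2 hta htb hsum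
    have hint := integral_mono (hVint _ hmem)
      (((hVint a ha).const_mul ta).add ((hVint b hb).const_mul tb)) hpt
    simp only [Pi.add_apply] at hint
    rw [integral_add ((hVint a ha).const_mul ta) ((hVint b hb).const_mul tb),
      integral_const_mul, integral_const_mul] at hint
    simp only [hFapp] at hint
    have hβF := mul_le_mul_of_nonneg_left hint hβ0.le
    linarith [hβF]
  by_cases hS : ∃ s, s ∈ Set.Icc (0:ℝ) 1 ∧ K ≥ lam*s + β*F s
  · -- nonempty case
    obtain ⟨s0, hs0, hgs0⟩ := hS
    have hKnn : 0 ≤ K := by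
      have h1 := hFlb s0 hs0
      have h2 := mul_le_mul_of_nonneg_left h1 hβ0.le
      nlinarith [mul_nonneg hlam.le hs0.1]
    have hg0 : lam*0 + β*F 0 ≤ K := by
      have hB0 := hBellman 0 ⟨le_rfl, zero_le_one⟩
      rw [hF0]
      rcases le_total (β * V 0) K with h | h
      · linarith
      · have hmax : max (lam*0 + β*F 0) K = lam*0 + β*F 0 := by
          rw [hF0]
          exact max_eq_left (by linarith)
        rw [hmax, hF0] at hB0
        have h3 : (1-β) * V 0 = 0 := by linarith
        have hV0 : V 0 = 0 := by
          rcases mul_eq_zero.1 h3 with h4 | h4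
          · linarith
          · exact h4
        rw [hV0]
        linarith
    set S : Set ℝ := {b | b ∈ Set.Icc (0:ℝ) 1 ∧ K ≥ lam*b + β*F b} with hSdef
    have h0S : (0:ℝ) ∈ S := ⟨⟨le_rfl, zero_le_one⟩, hg0⟩
    have hSdc : ∀ s ∈ S, ∀ b, 0 ≤ b → b ≤ s → b ∈ S := by
      intro s hs b hb0 hbs
      rcases eq_or_lt_of_le (hb0.trans hbs) with hs0' | hs0'
      · have hb00 : b = 0 := le_antisymm (hbs.trans hs0'.symm.le) hb0
        rw [hb00]; exact h0S
      · set tb := b / s with htbdef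
        set ta := 1 - b / s with htadef
        have htb : 0 ≤ tb := div_nonneg hb0 hs0'.le
        have htb1 : tb ≤ 1 := by
          rw [htbdef]; exact (div_le_one hs0').2 hbs
        have hta : 0 ≤ ta := by rw [htadef]; linarith
        have hsum : ta + tb = 1 := by rw [htadef, htbdef]; ring
        have hcomb : ta*0 + tb*s = b := by
          rw [mul_zero, zero_add, htbdef]
          exact div_mul_cancel₀ b (ne_of_gt hs0')
        have hch := hchord 0 ⟨le_rfl, zero_le_one⟩ s hs.1 ta tb hta htb hsum
        rw [hcomb] at hch
        refine ⟨⟨hb0, hbs.trans hs.1.2⟩, ?_⟩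
        have h1 := mul_le_mul_of_nonneg_left hg0 hta
        have h2 := mul_le_mul_of_nonneg_left hs.2 htb
        have hKK : ta*K + tb*K = K := by rw [← add_mul, hsum, one_mul]
        linarith
    have hne : S.Nonempty := ⟨0, h0S⟩
    have hbdd : BddAbove S := ⟨1, fun b hb => hb.1.2⟩
    have hbs0 : 0 ≤ sSup S := le_csSup hbdd h0S
    have hbs1 : sSup S ≤ 1 := csSup_le hne (fun b hb => hb.1.2)
    have hbsS : sSup S ∈ S := by
      by_contra hbsN
      have hgbs : K < lam*(sSup S) + β*F (sSup S) := by
        by_contra hcon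
        push_neg at hcon
        exact hbsN ⟨⟨hbs0, hbs1⟩, hcon⟩
      rcases eq_or_lt_of_le hbs1 with hbseq | hbslt
      · -- sSup S = 1
        have hIco : ∀ b, 0 ≤ b → b < 1 → b ∈ S := by
          intro b hb0 hb1
          obtain ⟨s, hsS, hbs'⟩ := exists_lt_of_lt_csSup hne (by rw [hbseq]; exact hb1)
          exact hSdc s hsS b hb0 hbs'.le
        have hlin : ∀ b, 0 ≤ b → b < 1 → lam*b ≤ (1-β)*K := by
          intro b h0 h1
          obtain ⟨_, hgb⟩ := hIco b h0 h1
          have hFb := hFlb b ⟨h0, h1.le⟩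
          have := mul_le_mul_of_nonneg_left hFb hβ0.le
          linarith
        have hlam_le : lam ≤ (1-β)*K := by
          by_contra hcon
          push_neg at hcon
          have hb0nn : 0 ≤ (1-β)*K/lam := div_nonneg (mul_nonneg (by linarith) hKnn) hlam.le
          have hb0lt : (1-β)*K/lam < 1 := (div_lt_one hlam).2 hcon
          have hb1 := hlin (((1-β)*K/lam + 1)/2) (by linarith) (by linarith)
          have : ((1-β)*K/lam + 1)/2 ≤ (1-β)*K/lam := by
            rw [le_div_iff₀ hlam]
            linarith [hb1]
          linarith
        have hV1p : V (1-p) ≤ K + c := by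
          rcases eq_or_lt_of_le hp0 with hpz | hppos
          · have h1p : (1:ℝ) - p = 1 := by rw [← hpz]; norm_num
            have hB1 := hBellman 1 ⟨zero_le_one, le_rfl⟩
            rw [hF1, h1p] at hB1
            have hKd2 : K = lam - c + β * V 1 := by rw [hKdef, h1p]
            have hmax : lam * 1 + β * V 1 = K + c := by rw [hKd2]; ring
            rw [hmax] at hB1
            rw [max_eq_left (by linarith)] at hB1
            rw [h1p, hB1]
          · have h1pS := hIco (1-p) (by linarith) (by linarith)
            have hB := hBellman (1-p) ⟨by linarith, by linarith⟩
            rw [max_eq_right h1pS.2] at hB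
            linarith [hB]
        have hβV := mul_le_mul_of_nonneg_left hV1p hβ0.le
        have hbc : β*c < 1*c := mul_lt_mul_of_pos_right hβ1 hc
        linarith [hKdef.le, hKdef.ge]
      · -- sSup S < 1
        set d := (sSup S + 1)/2 with hddef
        have hd0 : 0 ≤ d := by rw [hddef]; linarith
        have hd1 : d < 1 := by rw [hddef]; linarith
        have hdgt : sSup S < d := by rw [hddef]; linarith
        have hgd : K < lam*d + β*F d := by
          by_contra hcon
          push_neg at hcon
          have hdS : d ∈ S := ⟨⟨hd0, hd1.le⟩, hcon⟩
          have := le_csSup hbdd hdS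
          linarith
        set ε := lam*(sSup S) + β*F (sSup S) - K with hεdef
        have hεpos : 0 < ε := by rw [hεdef]; linarith
        set A := lam*d + β*F d - K with hAdef
        have hApos : 0 < A := by rw [hAdef]; linarith
        set δ := ε*(d - sSup S)/A with hδdef
        have hδpos : 0 < δ := div_pos (mul_pos hεpos (by linarith)) hApos
        obtain ⟨b, hbS, hbgt⟩ := exists_lt_of_lt_csSup hne (show sSup S - δ < sSup S by linarith)
        have hble : b ≤ sSup S := le_csSup hbdd hbS
        have hblt : b < sSup S := lt_of_le_of_ne hble (fun h => hbsN (h ▸ hbS))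
        have hb0 : 0 ≤ b := hbS.1.1
        have hdb : 0 < d - b := by linarith
        set t := (d - sSup S)/(d - b) with htdef
        set s' := (sSup S - b)/(d - b) with hs'def
        have hts : t + s' = 1 := by
          rw [htdef, hs'def, ← add_div, div_eq_one_iff_eq (ne_of_gt hdb)]
          ring
        have ht0 : 0 ≤ t := div_nonneg (by linarith) hdb.le
        have hs0' : 0 ≤ s' := div_nonneg (by linarith) hdb.le
        have hcomb : t*b + s'*d = sSup S := by
          rw [htdef, hs'def]
          field_simp
          ring
        have hch := hchord b hbS.1 d ⟨hd0, hd1.le⟩ t s' ht0 hs0' hts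
        rw [hcomb] at hch
        have hgb : lam*b + β*F b ≤ K := hbS.2
        have h1 : ε ≤ s'*A := by
          have htK := mul_le_mul_of_nonneg_left hgb ht0
          have htt : t = 1 - s' := by linarith
          have htK2 : t*K = K - s'*K := by rw [htt]; ring
          have hsA : s'*A = s'*(lam*d+β*F d) - s'*K := by rw [hAdef]; ring
          linarith [hεdef.le, hεdef.ge]
        have hδA : δ*A = ε*(d - sSup S) := by
          rw [hδdef]
          exact div_mul_cancel₀ _ (ne_of_gt hApos)
        have hs'rel : s'*(d - b) = sSup S - b := by
          rw [hs'def]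
          exact div_mul_cancel₀ _ (ne_of_gt hdb)
        have hkey : ε*(d-b) < ε*(d-b) := by
          calc ε*(d-b) ≤ (s'*A)*(d-b) := mul_le_mul_of_nonneg_right h1 hdb.le
            _ = (sSup S - b)*A := by linear_combination A * hs'rel
            _ < δ*A := mul_lt_mul_of_pos_right (by linarith) hApos
            _ = ε*(d - sSup S) := hδA
            _ ≤ ε*(d-b) := mul_le_mul_of_nonneg_left (by linarith) hεpos.le
        exact absurd hkey (lt_irrefl _)
    refine ⟨sSup S, ?_⟩
    ext b
    simp only [Set.mem_sep_iff, Set.mem_inter_iff, Set.mem_Icc]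
    constructor
    · rintro ⟨⟨hb0, hb1⟩, hineq⟩
      exact ⟨⟨hb0, le_csSup hbdd ⟨⟨hb0, hb1⟩, hineq⟩⟩, hb0, hb1⟩
    · rintro ⟨⟨hb0, hbbs⟩, _, hb1⟩
      obtain ⟨hmem, hineq⟩ := hSdc (sSup S) hbsS b hb0 hbbs
      exact ⟨hmem, hineq⟩
  · -- empty case
    refine ⟨-1, ?_⟩
    rw [Set.Icc_eq_empty (by norm_num : ¬ (0:ℝ) ≤ -1), Set.empty_inter]
    ext b
    simp only [Set.mem_sep_iff, Set.mem_empty_iff_false, iff_false, not_and]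
    intro hb hineq
    exact hS ⟨b, hb, hineq⟩
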